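/- Let n, σ², k > 0 and t ≥ 0, and define f : [0,∞) → ℝ by f(λ) = σ² (n k λ² + σ² t) / (nλ + σ²)². Then f attains its global minimum over [0,∞) at λ = t/k, i.e., f(t/k) ≤ f(λ) for all λ ≥ 0. -/

import Mathlib

/-- The per-block MSE `f(λ) = σ²(nkλ² + σ²t)/(nλ+σ²)²` attains its global minimum
over `[0,∞)` at `λ = t/k`. -/
theorem stmt_12 (n σ2 k t : ℝ) (hn : 0 < n) (hσ2 : 0 < σ2) (hk : 0 < k) (ht : 0 ≤ t)
    (f : ℝ → ℝ) (hf : ∀ l, f l = σ2 * (n * k * l ^ 2 + σ2 * t) / (n * l + σ2) ^ 2) :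
    ∀ l : ℝ, 0 ≤ l → f (t / k) ≤ f l := by
  intro l hl
  rw [hf, hf]
  set s := t / k with hs
  have hs0 : 0 ≤ s := div_nonneg ht hk.le
  have hts : t = k * s := by
    have := (eq_div_iff hk.ne').mp hs; linarith [mul_comm s k]
  have h1 : 0 < (n * s + σ2) ^ 2 := by positivity
  have h2 : 0 < (n * l + σ2) ^ 2 := by positivity
  rw [div_le_div_iff₀ h1 h2]
  rw [hts]
  nlinarith [mul_nonneg (mul_nonneg (mul_nonneg (mul_nonneg (mul_nonneg hσ2.le hσ2.le) hk.le)
    hn.le) (by positivity : (0:ℝ) ≤ n * s + σ2)) (sq_nonneg (l - s))]
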